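/- For every n ≥ 3 and d ≥ 2, the Rook's Walk and the RWBD chain have identical distance-to-stationarity profiles: for every t ≥ 0, max_{x ∈ Ω} ‖P^t(x,·) − π‖_TV = max_{s ∈ {0,…,d}} ‖P*^t(s,·) − π*‖_TV. Consequently, for every ε ∈ (0,1) the mixing times of the two chains are equal. -/

import Mathlib

open Finset

noncomputable section

/-- Total variation distance between two distributions on a finite set. -/
def tv {S : Type*} [Fintype S] (μ ν : S → ℝ) : ℝ :=
  (∑ s, |μ s - ν s|) / 2

/-- The state space of the Rook's Walk: a `d`-dimensional board of side length `n`. -/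
abbrev RW.State (n d : ℕ) : Type := Fin d → Fin n

/-- The transition matrix of the Rook's Walk on `{1,…,n}^d`. -/
def RW.P (n d : ℕ) : Matrix (RW.State n d) (RW.State n d) ℝ :=
  Matrix.of fun x y =>
    if hammingDist x y = 1 then 1 / ((d : ℝ) * ((n : ℝ) - 1)) else 0

/-- The (uniform) stationary distribution of the Rook's Walk. -/
def RW.pi (n d : ℕ) : RW.State n d → ℝ := fun _ => 1 / (n : ℝ) ^ d

/-- Worst-case total variation distance to stationarity at time `t`. -/
def RW.dist (n d : ℕ) (t : ℕ) : ℝ :=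
  ⨆ x : RW.State n d, tv ((RW.P n d ^ t) x) (RW.pi n d)

/-- The mixing time of the Rook's Walk. -/
def RW.tmix (n d : ℕ) (ε : ℝ) : ℕ := sInf {t : ℕ | RW.dist n d t ≤ ε}

/-- The transition matrix of the Rook's Walk Birth-Death (RWBD) chain on `{0,…,d}`. -/
def BD.P (n d : ℕ) : Matrix (Fin (d + 1)) (Fin (d + 1)) ℝ :=
  Matrix.of fun x y =>
    if (y : ℕ) + 1 = (x : ℕ) then (x : ℝ) / ((d : ℝ) * ((n : ℝ) - 1))
    else if (y : ℕ) = (x : ℕ) then (x : ℝ) * ((n : ℝ) - 2) / ((d : ℝ) * ((n : ℝ) - 1))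
    else if (y : ℕ) = (x : ℕ) + 1 then ((d : ℝ) - (x : ℝ)) / (d : ℝ)
    else 0

/-- The stationary distribution of the RWBD chain: `π*(x) = C(d,x)(n-1)^x n^{-d}`. -/
def BD.pi (n d : ℕ) : Fin (d + 1) → ℝ :=
  fun x => (d.choose (x : ℕ) : ℝ) * ((n : ℝ) - 1) ^ (x : ℕ) / (n : ℝ) ^ d

/-- Worst-case total variation distance to stationarity of the RWBD chain at time `t`. -/
def BD.dist (n d : ℕ) (t : ℕ) : ℝ :=
  ⨆ x : Fin (d + 1), tv ((BD.P n d ^ t) x) (BD.pi n d)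

/-- The mixing time of the RWBD chain. -/
def BD.tmix (n d : ℕ) (ε : ℝ) : ℕ := sInf {t : ℕ | BD.dist n d t ≤ ε}

section Aux

open Function

variable {n d : ℕ}

/-- Hamming weight of a state. -/
def wt [NeZero n] (z : RW.State n d) : ℕ := hammingDist z 0

lemma wt_def [NeZero n] (z : RW.State n d) : wt z = #{i | z i ≠ 0} := rfl

lemma wt_le [NeZero n] (z : RW.State n d) : wt z ≤ d := by
  exact (hammingDist_le_card_fintype : hammingDist z 0 ≤ Fintype.card (Fin d)).trans_eq (Fintype.card_fin d)

/-- Hamming weight as an element of `Fin (d+1)`. -/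
def wtF [NeZero n] (z : RW.State n d) : Fin (d + 1) := ⟨wt z, Nat.lt_succ_of_le (wt_le z)⟩

lemma wt_update [NeZero n] (y : RW.State n d) (i : Fin d) (v : Fin n) :
    wt (Function.update y i v) + (if y i = 0 then 0 else 1) =
      wt y + (if v = 0 then 0 else 1) := by
  classical
  have hset : ({j | Function.update y i v j ≠ 0} : Finset (Fin d)) =
      if v = 0 then ({j | y j ≠ 0} : Finset (Fin d)).erase i
      else insert i (({j | y j ≠ 0} : Finset (Fin d)).erase i) := by
    ext j
    by_cases hj : j = i
    · subst hj
      by_cases hv : v = 0 <;> simp [hv]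
    · by_cases hv : v = 0 <;>
        simp [Function.update_of_ne hj, hv, hj]
  rw [wt_def, wt_def, hset]
  by_cases hv : v = 0 <;> by_cases hy : y i = 0
  · have h0 : i ∉ ({j | y j ≠ 0} : Finset (Fin d)) := by simp [hy]
    simp [hv, hy, Finset.erase_eq_of_notMem h0]
  · have hi : i ∈ ({j | y j ≠ 0} : Finset (Fin d)) := by simp [hy]
    rw [if_pos hv]
    simpa [hv, hy] using Finset.card_erase_add_one hi
  · have h0 : i ∉ ({j | y j ≠ 0} : Finset (Fin d)) := by simp [hy]
    rw [Finset.erase_eq_of_notMem h0]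
    simp [hv, hy, Finset.card_insert_of_notMem h0]
  · have hi : i ∈ ({j | y j ≠ 0} : Finset (Fin d)) := by simp [hy]
    rw [Finset.insert_erase hi]
    simp [hv, hy]

lemma hamming_one_update (y : RW.State n d) (i : Fin d) (v : Fin n) (hv : v ≠ y i) :
    hammingDist y (Function.update y i v) = 1 := by
  have hset : ({j | y j ≠ Function.update y i v j} : Finset (Fin d)) = {i} := by
    ext j
    by_cases hj : j = i
    · subst hj; simp [Ne.symm hv]
    · simp [Function.update_of_ne hj, hj]
  show ({j | y j ≠ Function.update y i v j} : Finset (Fin d)).card = 1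
  rw [hset]; simp

lemma exists_update_of_hamming_one {y z : RW.State n d} (h : hammingDist y z = 1) :
    ∃ i, z = Function.update y i (z i) ∧ z i ≠ y i := by
  have h1 : ({j | y j ≠ z j} : Finset (Fin d)).card = 1 := h
  obtain ⟨i, hi⟩ := Finset.card_eq_one.mp h1
  have hiz : z i ≠ y i := by
    have hmem : i ∈ ({j | y j ≠ z j} : Finset (Fin d)) := by rw [hi]; simp
    simp only [Finset.mem_filter, Finset.mem_univ, true_and] at hmem
    exact fun hc => hmem hc.symm
  refine ⟨i, ?_, hiz⟩
  funext j
  by_cases hj : j = i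
  · subst hj; simp
  · have hne : j ∉ ({j | y j ≠ z j} : Finset (Fin d)) := by rw [hi]; simp [hj]
    simp only [Finset.mem_filter, Finset.mem_univ, true_and, not_not] at hne
    simp [Function.update_of_ne hj, hne]

lemma card_ne_zero_fin [NeZero n] : ({v : Fin n | v ≠ 0} : Finset (Fin n)).card = n - 1 := by
  rw [Finset.filter_ne' Finset.univ (0 : Fin n),
    Finset.card_erase_of_mem (Finset.mem_univ _), Finset.card_univ, Fintype.card_fin]

lemma card_ne_two [NeZero n] (a : Fin n) (ha : a ≠ 0) :
    ({v : Fin n | v ≠ a ∧ v ≠ 0} : Finset (Fin n)).card = n - 2 := by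
  have hset : ({v : Fin n | v ≠ a ∧ v ≠ 0} : Finset (Fin n)) =
      (Finset.univ.erase a).erase 0 := by
    ext v; simp [and_comm]
  rw [hset, Finset.card_erase_of_mem (Finset.mem_erase.mpr ⟨Ne.symm ha, Finset.mem_univ _⟩),
    Finset.card_erase_of_mem (Finset.mem_univ _), Finset.card_univ, Fintype.card_fin]
  omega

lemma card_support [NeZero n] (y : RW.State n d) :
    ({i | y i ≠ 0} : Finset (Fin d)).card = wt y := (wt_def y).symm

lemma card_zero_set [NeZero n] (y : RW.State n d) :
    ({i | y i = 0} : Finset (Fin d)).card = d - wt y := by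
  have h := Finset.card_filter_add_card_filter_not
    (s := (Finset.univ : Finset (Fin d))) (p := fun i => y i = 0)
  have h2 : ({i | y i ≠ 0} : Finset (Fin d)).card = wt y := card_support y
  have h3 : (Finset.univ.filter (fun i : Fin d => ¬ y i = 0)) =
      ({i | y i ≠ 0} : Finset (Fin d)) := rfl
  rw [h3, h2, Finset.card_univ, Fintype.card_fin] at h
  have := wt_le y
  omega

lemma inner_count [NeZero n] (y : RW.State n d) (k : ℕ) (i : Fin d) :
    ({v : Fin n | v ≠ y i ∧ wt (Function.update y i v) = k} : Finset (Fin n)).card =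
      if y i = 0 then (if k = wt y + 1 then n - 1 else 0)
      else (if k + 1 = wt y then 1 else 0) + (if k = wt y then n - 2 else 0) := by
  by_cases hy : y i = 0
  · rw [if_pos hy]
    have hupd : ∀ v : Fin n, v ≠ 0 → wt (Function.update y i v) = wt y + 1 := by
      intro v hv
      have h := wt_update y i v
      rw [if_pos hy, if_neg hv] at h
      omega
    by_cases hk : k = wt y + 1
    · rw [if_pos hk]
      rw [← card_ne_zero_fin (n := n)]
      congr 1
      ext v
      simp only [Finset.mem_filter, Finset.mem_univ, true_and, hy]
      constructor
      · rintro ⟨hv, -⟩; exact hv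
      · intro hv; exact ⟨hv, by rw [hupd v hv, hk]⟩
    · rw [if_neg hk]
      rw [Finset.card_eq_zero]
      ext v
      simp only [Finset.mem_filter, Finset.mem_univ, true_and, Finset.notMem_empty,
        iff_false, not_and, hy]
      intro hv
      rw [hupd v hv]
      omega
  · rw [if_neg hy]
    have hw1 : 1 ≤ wt y := by
      rw [← card_support y]
      exact Finset.card_pos.mpr ⟨i, by simp [hy]⟩
    have hupd0 : wt (Function.update y i 0) + 1 = wt y := by
      have h := wt_update y i 0
      rw [if_neg hy, if_pos rfl] at h
      omega
    have hupd : ∀ v : Fin n, v ≠ 0 → wt (Function.update y i v) = wt y := by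
      intro v hv
      have h := wt_update y i v
      rw [if_neg hy, if_neg hv] at h
      omega
    by_cases hk1 : k + 1 = wt y
    · have hk2 : ¬ k = wt y := by omega
      rw [if_pos hk1, if_neg hk2]
      have hset : ({v : Fin n | v ≠ y i ∧ wt (Function.update y i v) = k} : Finset (Fin n))
          = {0} := by
        ext v
        simp only [Finset.mem_filter, Finset.mem_univ, true_and, Finset.mem_singleton]
        constructor
        · rintro ⟨hv, hw⟩
          by_contra hv0
          rw [hupd v hv0] at hw
          omega
        · rintro rfl
          exact ⟨Ne.symm hy, by omega⟩
      rw [hset]; simp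
    · by_cases hk2 : k = wt y
      · rw [if_neg hk1, if_pos hk2]
        have hset : ({v : Fin n | v ≠ y i ∧ wt (Function.update y i v) = k} : Finset (Fin n))
            = ({v : Fin n | v ≠ y i ∧ v ≠ 0} : Finset (Fin n)) := by
          ext v
          simp only [Finset.mem_filter, Finset.mem_univ, true_and]
          constructor
          · rintro ⟨hv, hw⟩
            refine ⟨hv, ?_⟩
            rintro rfl
            omega
          · rintro ⟨hv, hv0⟩
            exact ⟨hv, by rw [hupd v hv0, hk2]⟩
        rw [hset, card_ne_two (y i) hy]
        omega
      · rw [if_neg hk1, if_neg hk2]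
        rw [Finset.card_eq_zero]
        ext v
        simp only [Finset.mem_filter, Finset.mem_univ, true_and, Finset.notMem_empty,
          iff_false, not_and]
        intro hv
        by_cases hv0 : v = 0
        · subst hv0; omega
        · rw [hupd v hv0]; omega

lemma neighbor_count [NeZero n] (y : RW.State n d) (k : ℕ) :
    ({z : RW.State n d | wt z = k ∧ hammingDist y z = 1} : Finset _).card =
      (d - wt y) * (if k = wt y + 1 then n - 1 else 0)
        + wt y * ((if k + 1 = wt y then 1 else 0) + (if k = wt y then n - 2 else 0)) := by
  classical
  have hcard : ({z : RW.State n d | wt z = k ∧ hammingDist y z = 1} : Finset _).card =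
      ({p : Fin d × Fin n | p.2 ≠ y p.1 ∧ wt (Function.update y p.1 p.2) = k} :
        Finset (Fin d × Fin n)).card := by
    rw [eq_comm]
    apply Finset.card_bij (fun p _ => Function.update y p.1 p.2)
    · intro p hp
      simp only [Finset.mem_filter, Finset.mem_univ, true_and] at hp ⊢
      exact ⟨hp.2, hamming_one_update y p.1 p.2 hp.1⟩
    · intro p hp q hq hpq
      simp only [Finset.mem_filter, Finset.mem_univ, true_and] at hp hq
      by_cases h : p.1 = q.1
      · have h2 : p.2 = q.2 := by
          have hc := congrFun hpq p.1
          rw [Function.update_self, h, Function.update_self] at hc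
          exact hc
        exact Prod.ext h h2
      · exfalso
        have hc := congrFun hpq p.1
        rw [Function.update_self, Function.update_of_ne h] at hc
        exact hp.1 hc
    · intro z hz
      simp only [Finset.mem_filter, Finset.mem_univ, true_and] at hz
      obtain ⟨i, hzi, hne⟩ := exists_update_of_hamming_one hz.2
      refine ⟨(i, z i), ?_, hzi.symm⟩
      simp only [Finset.mem_filter, Finset.mem_univ, true_and]
      exact ⟨hne, by rw [← hzi]; exact hz.1⟩
  rw [hcard, Finset.card_filter, Fintype.sum_prod_type]
  have hinner : ∀ i : Fin d,
      (∑ v : Fin n, if v ≠ y i ∧ wt (Function.update y i v) = k then 1 else 0) =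
        if y i = 0 then (if k = wt y + 1 then n - 1 else 0)
        else (if k + 1 = wt y then 1 else 0) + (if k = wt y then n - 2 else 0) := by
    intro i
    rw [← Finset.card_filter]
    exact inner_count y k i
  rw [Finset.sum_congr rfl (fun i _ => hinner i)]
  rw [Finset.sum_ite, Finset.sum_const, Finset.sum_const]
  have hz := card_zero_set y
  have hs : (Finset.univ.filter (fun i : Fin d => ¬ y i = 0)).card = wt y := card_support y
  rw [hs, hz]
  simp [smul_eq_mul]

lemma lump_one [NeZero n] (hn : 3 ≤ n) (hd : 1 ≤ d) (y : RW.State n d) (k : Fin (d + 1)) :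
    ∑ z ∈ ({z : RW.State n d | wt z = (k : ℕ)} : Finset _), RW.P n d y z
      = BD.P n d (wtF y) k := by
  classical
  have hd0 : (d : ℝ) ≠ 0 := Nat.cast_ne_zero.mpr (by omega)
  have hone : (1 : ℝ) < (n : ℝ) := by exact_mod_cast (by omega : 1 < n)
  have hn1 : (n : ℝ) - 1 ≠ 0 := sub_ne_zero.mpr (ne_of_gt hone)
  have hLHS : ∑ z ∈ ({z : RW.State n d | wt z = (k : ℕ)} : Finset _), RW.P n d y z
      = (({z : RW.State n d | wt z = (k : ℕ) ∧ hammingDist y z = 1} : Finset _).card : ℝ)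
          * (1 / ((d : ℝ) * ((n : ℝ) - 1))) := by
    have hP : ∀ z ∈ ({z : RW.State n d | wt z = (k : ℕ)} : Finset _),
        RW.P n d y z = if hammingDist y z = 1 then 1 / ((d : ℝ) * ((n : ℝ) - 1)) else 0 :=
      fun z _ => rfl
    rw [Finset.sum_congr rfl hP, Finset.sum_ite, Finset.sum_const, Finset.sum_const_zero,
      add_zero, nsmul_eq_mul, Finset.filter_filter]
  rw [hLHS, neighbor_count y (k : ℕ)]
  have hval : ((wtF y : Fin (d + 1)) : ℕ) = wt y := rfl
  have hsd : wt y ≤ d := wt_le y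
  have e1 : ((n - 1 : ℕ) : ℝ) = (n : ℝ) - 1 := by
    rw [Nat.cast_sub (by omega : 1 ≤ n)]; norm_num
  have e2 : ((n - 2 : ℕ) : ℝ) = (n : ℝ) - 2 := by
    rw [Nat.cast_sub (by omega : 2 ≤ n)]; norm_num
  have e3 : ((d - wt y : ℕ) : ℝ) = (d : ℝ) - (wt y : ℝ) := by
    rw [Nat.cast_sub hsd]
  show _ = BD.P n d (wtF y) k
  simp only [BD.P, Matrix.of_apply, hval]
  by_cases h1 : (k : ℕ) + 1 = wt y
  · have h2 : ¬ (k : ℕ) = wt y := by omega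
    have h3 : ¬ (k : ℕ) = wt y + 1 := by omega
    simp only [if_pos h1, if_neg h2, if_neg h3]
    push_cast
    ring
  · by_cases h2 : (k : ℕ) = wt y
    · have h3 : ¬ (k : ℕ) = wt y + 1 := by omega
      simp only [if_pos h2, if_neg h1, if_neg h3]
      simp only [Nat.cast_add, Nat.cast_mul, e2, Nat.cast_zero, Nat.cast_one]
      push_cast
      ring
    · by_cases h3 : (k : ℕ) = wt y + 1
      · simp only [if_pos h3, if_neg h1, if_neg h2]
        simp only [Nat.cast_add, Nat.cast_mul, e1, e3, Nat.cast_zero]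
        field_simp
        ring
      · simp only [if_neg h1, if_neg h2, if_neg h3]
        simp

lemma card_sphere [NeZero n] {k : ℕ} (hk : k ≤ d) :
    ({z : RW.State n d | wt z = k} : Finset _).card = d.choose k * (n - 1) ^ k := by
  classical
  rw [Finset.card_eq_sum_card_fiberwise
    (f := fun z : RW.State n d => ({i | z i ≠ 0} : Finset (Fin d)))
    (t := Finset.powersetCard k Finset.univ)
    (by
      intro z hz
      simp only [Finset.mem_coe, Finset.mem_filter, Finset.mem_univ, true_and] at hz
      rw [Finset.mem_coe, Finset.mem_powersetCard]
      exact ⟨Finset.subset_univ _, by rw [card_support z, hz]⟩)]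
  have hfiber : ∀ s' ∈ Finset.powersetCard k (Finset.univ : Finset (Fin d)),
      (({z : RW.State n d | wt z = k} : Finset _).filter
        (fun z => ({i | z i ≠ 0} : Finset (Fin d)) = s')).card = (n - 1) ^ k := by
    intro s' hs'
    rw [Finset.mem_powersetCard] at hs'
    have hset : (({z : RW.State n d | wt z = k} : Finset _).filter
        (fun z => ({i | z i ≠ 0} : Finset (Fin d)) = s'))
        = Fintype.piFinset (fun i : Fin d =>
            if i ∈ s' then ({v : Fin n | v ≠ 0} : Finset (Fin n)) else {0}) := by
      ext z
      simp only [Finset.mem_filter, Finset.mem_univ, true_and, Fintype.mem_piFinset]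
      constructor
      · rintro ⟨-, hsupp⟩ i
        by_cases hi : i ∈ s'
        · rw [if_pos hi]
          have hmem : i ∈ ({i | z i ≠ 0} : Finset (Fin d)) := by rw [hsupp]; exact hi
          simpa using hmem
        · rw [if_neg hi]
          have hmem : i ∉ ({i | z i ≠ 0} : Finset (Fin d)) := by rw [hsupp]; exact hi
          simp only [Finset.mem_filter, Finset.mem_univ, true_and, not_not] at hmem
          simpa using hmem
      · intro h
        have hsupp : ({i | z i ≠ 0} : Finset (Fin d)) = s' := by
          ext i
          have hi2 := h i
          by_cases hi : i ∈ s'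
          · rw [if_pos hi] at hi2
            simp only [Finset.mem_filter, Finset.mem_univ, true_and] at hi2 ⊢
            simp [hi, hi2]
          · rw [if_neg hi] at hi2
            simp only [Finset.mem_singleton] at hi2
            simp [hi, hi2]
        exact ⟨by rw [wt_def, hsupp, hs'.2], hsupp⟩
    rw [hset, Fintype.card_piFinset]
    have hcards : ∀ i : Fin d,
        (if i ∈ s' then ({v : Fin n | v ≠ 0} : Finset (Fin n)) else {0}).card
          = if i ∈ s' then n - 1 else 1 := by
      intro i; by_cases hi : i ∈ s' <;> simp [hi, card_ne_zero_fin]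
    rw [Finset.prod_congr rfl (fun i _ => hcards i), Finset.prod_ite, Finset.prod_const,
      Finset.prod_const, one_pow, mul_one, Finset.filter_mem_eq_inter, Finset.univ_inter,
      hs'.2]
  rw [Finset.sum_congr rfl hfiber, Finset.sum_const, Finset.card_powersetCard,
    Finset.card_univ, Fintype.card_fin, smul_eq_mul]

/-- A canonical state of each Hamming weight. -/
def rep (n : ℕ) [NeZero n] {d : ℕ} (j : Fin (d + 1)) : RW.State n d :=
  fun i => if (i : ℕ) < (j : ℕ) then 1 else 0

lemma one_ne_zero_fin [NeZero n] (hn : 3 ≤ n) : (1 : Fin n) ≠ 0 := by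
  intro h
  have hval := congrArg Fin.val h
  rw [Fin.val_one' n, Fin.val_zero, Nat.mod_eq_of_lt (by omega : 1 < n)] at hval
  exact one_ne_zero hval

lemma wt_rep [NeZero n] (hn : 3 ≤ n) (j : Fin (d + 1)) : wt (rep n j) = (j : ℕ) := by
  have hj : (j : ℕ) ≤ d := Nat.lt_succ_iff.mp j.isLt
  rw [wt_def]
  have hset : ({i | rep n j i ≠ 0} : Finset (Fin d)) =
      ({i : Fin d | (i : ℕ) < (j : ℕ)} : Finset (Fin d)) := by
    ext i
    by_cases hi : (i : ℕ) < (j : ℕ) <;> simp [rep, hi, one_ne_zero_fin hn]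
  rw [hset]
  have hmap : ({i : Fin d | (i : ℕ) < (j : ℕ)} : Finset (Fin d)) =
      Finset.map (Fin.castLEEmb hj) Finset.univ := by
    ext i
    rw [Finset.mem_map]
    simp only [Finset.mem_filter, Finset.mem_univ, true_and]
    constructor
    · intro hi
      exact ⟨⟨(i : ℕ), hi⟩, Fin.ext rfl⟩
    · rintro ⟨a, rfl⟩
      exact a.isLt
  rw [hmap, Finset.card_map, Finset.card_univ, Fintype.card_fin]

lemma wtF_rep [NeZero n] (hn : 3 ≤ n) (j : Fin (d + 1)) : wtF (rep n j) = j :=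
  Fin.ext (wt_rep hn j)

lemma lump_pow [NeZero n] (hn : 3 ≤ n) (hd : 1 ≤ d) (t : ℕ) (y : RW.State n d)
    (k : Fin (d + 1)) :
    ∑ z ∈ ({z : RW.State n d | wt z = (k : ℕ)} : Finset _), (RW.P n d ^ t) y z
      = (BD.P n d ^ t) (wtF y) k := by
  classical
  induction t generalizing k with
  | zero =>
    simp only [pow_zero, Matrix.one_apply]
    rw [Finset.sum_ite_eq]
    have hiff : wtF y = k ↔ wt y = (k : ℕ) := ⟨fun h => by rw [← h]; rfl, fun h => Fin.ext h⟩
    by_cases h : wt y = (k : ℕ)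
    · rw [if_pos (by simp [h]), if_pos (hiff.mpr h)]
    · rw [if_neg (by simp [h]), if_neg (fun hc => h (hiff.mp hc))]
  | succ t ih =>
    rw [pow_succ, pow_succ]
    simp only [Matrix.mul_apply]
    rw [Finset.sum_comm]
    have step : ∀ w : RW.State n d,
        ∑ z ∈ ({z : RW.State n d | wt z = (k : ℕ)} : Finset _),
          (RW.P n d ^ t) y w * RW.P n d w z
          = (RW.P n d ^ t) y w * BD.P n d (wtF w) k := by
      intro w
      rw [← Finset.mul_sum, lump_one hn hd w k]
    rw [Finset.sum_congr rfl (fun w _ => step w)]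
    have hgroup : ∑ w : RW.State n d, (RW.P n d ^ t) y w * BD.P n d (wtF w) k
        = ∑ j : Fin (d + 1), ∑ w ∈ Finset.univ.filter (fun w : RW.State n d => wtF w = j),
            (RW.P n d ^ t) y w * BD.P n d (wtF w) k := by
      rw [Finset.sum_fiberwise_eq_sum_filter]
      simp
    rw [hgroup]
    apply Finset.sum_congr rfl
    intro j _
    have hterm : ∀ w ∈ Finset.univ.filter (fun w : RW.State n d => wtF w = j),
        (RW.P n d ^ t) y w * BD.P n d (wtF w) k = (RW.P n d ^ t) y w * BD.P n d j k := by
      intro w hw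
      simp only [Finset.mem_filter] at hw
      rw [hw.2]
    rw [Finset.sum_congr rfl hterm, ← Finset.sum_mul]
    congr 1
    have hsets : Finset.univ.filter (fun w : RW.State n d => wtF w = j)
        = ({w : RW.State n d | wt w = (j : ℕ)} : Finset _) := by
      ext w
      simp only [Finset.mem_filter, Finset.mem_univ, true_and]
      exact ⟨fun h => by rw [← h]; rfl, fun h => Fin.ext h⟩
    rw [hsets]
    exact ih j

lemma hamming_translate [NeZero n] (x a b : RW.State n d) :
    hammingDist (fun i => x i + a i) (fun i => x i + b i) = hammingDist a b := by
  have hset : ({i | x i + a i ≠ x i + b i} : Finset (Fin d)) =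
      ({i | a i ≠ b i} : Finset (Fin d)) := by
    ext i; simp
  exact congrArg Finset.card hset

lemma P_translate [NeZero n] (x a b : RW.State n d) :
    RW.P n d (fun i => x i + a i) (fun i => x i + b i) = RW.P n d a b := by
  simp only [RW.P, Matrix.of_apply, hamming_translate]

lemma P_pow_translate [NeZero n] (x : RW.State n d) (t : ℕ) (a b : RW.State n d) :
    (RW.P n d ^ t) (fun i => x i + a i) (fun i => x i + b i) = (RW.P n d ^ t) a b := by
  induction t generalizing a b with
  | zero =>
    simp only [pow_zero, Matrix.one_apply]
    by_cases h : a = b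
    · rw [if_pos (by rw [h]), if_pos h]
    · rw [if_neg ?_, if_neg h]
      intro hc
      apply h
      funext i
      exact add_left_cancel (congrFun hc i)
  | succ t ih =>
    rw [pow_succ]
    simp only [Matrix.mul_apply]
    rw [← Equiv.sum_comp (Equiv.piCongrRight fun i : Fin d => Equiv.addLeft (x i))
      (fun z => (RW.P n d ^ t) (fun i => x i + a i) z
        * RW.P n d z (fun i => x i + b i))]
    apply Finset.sum_congr rfl
    intro w _
    show (RW.P n d ^ t) (fun i => x i + a i) (fun i => x i + w i)
        * RW.P n d (fun i => x i + w i) (fun i => x i + b i) = _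
    rw [ih a w, P_translate]

lemma tv_translate [NeZero n] (t : ℕ) (x : RW.State n d) :
    tv ((RW.P n d ^ t) x) (RW.pi n d) = tv ((RW.P n d ^ t) 0) (RW.pi n d) := by
  unfold tv
  congr 1
  rw [← Equiv.sum_comp (Equiv.piCongrRight fun i : Fin d => Equiv.addLeft (x i))
    (fun z => |(RW.P n d ^ t) x z - RW.pi n d z|)]
  apply Finset.sum_congr rfl
  intro z _
  show |(RW.P n d ^ t) x (fun i => x i + z i) - RW.pi n d (fun i => x i + z i)|
      = |(RW.P n d ^ t) 0 z - RW.pi n d z|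
  have h := P_pow_translate x t 0 z
  have h0 : (fun i : Fin d => x i + (0 : RW.State n d) i) = x := by
    funext i; simp
  rw [h0] at h
  rw [h]
  rfl

lemma wt_zero [NeZero n] : wt (0 : RW.State n d) = 0 := hammingDist_self 0

lemma wtF_zero [NeZero n] : wtF (0 : RW.State n d) = 0 := Fin.ext wt_zero

lemma unif_pow_aux [NeZero n] (hn : 3 ≤ n) (hd : 1 ≤ d) (t : ℕ) :
    ∀ y y' : RW.State n d, wt y = wt y' →
      (RW.P n d ^ t) 0 y = (RW.P n d ^ t) 0 y' := by
  classical
  induction t with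
  | zero =>
    intro y y' h
    simp only [pow_zero, Matrix.one_apply]
    by_cases hy : y = (0 : RW.State n d)
    · have hy' : y' = (0 : RW.State n d) := by
        have hw : wt y' = 0 := by rw [← h, hy, wt_zero]
        exact hammingDist_eq_zero.mp hw
      rw [if_pos hy.symm, if_pos hy'.symm]
    · have hy' : y' ≠ (0 : RW.State n d) := by
        intro hc
        apply hy
        apply hammingDist_eq_zero.mp
        rw [show (hammingDist y 0 : ℕ) = wt y from rfl, h, hc, wt_zero]
      rw [if_neg (fun hc => hy hc.symm), if_neg (fun hc => hy' hc.symm)]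
  | succ t ih =>
    intro y y' h
    have key : ∀ yy : RW.State n d, (RW.P n d ^ (t + 1)) 0 yy
        = ∑ j : Fin (d + 1), (RW.P n d ^ t) 0 (rep n j) * BD.P n d (wtF yy) j := by
      intro yy
      rw [pow_succ]
      simp only [Matrix.mul_apply]
      have hterm : ∀ w : RW.State n d, (RW.P n d ^ t) 0 w * RW.P n d w yy
          = (RW.P n d ^ t) 0 (rep n (wtF w)) * RW.P n d yy w := by
        intro w
        rw [ih w (rep n (wtF w)) (by rw [wt_rep hn]; rfl)]
        congr 1
        simp only [RW.P, Matrix.of_apply, hammingDist_comm]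
      rw [Finset.sum_congr rfl (fun w _ => hterm w)]
      have hgroup : ∑ w : RW.State n d,
          (RW.P n d ^ t) 0 (rep n (wtF w)) * RW.P n d yy w
          = ∑ j : Fin (d + 1), ∑ w ∈ Finset.univ.filter
              (fun w : RW.State n d => wtF w = j),
              (RW.P n d ^ t) 0 (rep n (wtF w)) * RW.P n d yy w := by
        rw [Finset.sum_fiberwise_eq_sum_filter]
        simp
      rw [hgroup]
      apply Finset.sum_congr rfl
      intro j _
      have hterm2 : ∀ w ∈ Finset.univ.filter (fun w : RW.State n d => wtF w = j),
          (RW.P n d ^ t) 0 (rep n (wtF w)) * RW.P n d yy w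
            = (RW.P n d ^ t) 0 (rep n j) * RW.P n d yy w := by
        intro w hw
        simp only [Finset.mem_filter] at hw
        rw [hw.2]
      rw [Finset.sum_congr rfl hterm2, ← Finset.mul_sum]
      congr 1
      have hsets : Finset.univ.filter (fun w : RW.State n d => wtF w = j)
          = ({w : RW.State n d | wt w = (j : ℕ)} : Finset _) := by
        ext w
        simp only [Finset.mem_filter, Finset.mem_univ, true_and]
        exact ⟨fun hh => by rw [← hh]; rfl, fun hh => Fin.ext hh⟩
      rw [hsets]
      exact lump_one hn hd yy j
    rw [key y, key y', show wtF y = wtF y' from Fin.ext h]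

lemma unif_pow [NeZero n] (hn : 3 ≤ n) (hd : 1 ≤ d) (t : ℕ) (y : RW.State n d) :
    (RW.P n d ^ t) 0 y = (RW.P n d ^ t) 0 (rep n (wtF y)) :=
  unif_pow_aux hn hd t y (rep n (wtF y)) (by rw [wt_rep hn]; rfl)

lemma sum_pi_fiber [NeZero n] (hn : 3 ≤ n) (k : Fin (d + 1)) :
    ∑ z ∈ ({z : RW.State n d | wt z = (k : ℕ)} : Finset _), RW.pi n d z = BD.pi n d k := by
  have e1 : ((n - 1 : ℕ) : ℝ) = (n : ℝ) - 1 := by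
    rw [Nat.cast_sub (by omega : 1 ≤ n)]; norm_num
  simp only [RW.pi, BD.pi]
  rw [Finset.sum_const, card_sphere (Nat.lt_succ_iff.mp k.isLt), nsmul_eq_mul]
  push_cast [e1]
  ring

end Aux

/-- The Rook's Walk and the RWBD chain have identical distance-to-stationarity profiles,
and hence equal mixing times. -/
theorem rook_walk_rwbd_same_profile (n d : ℕ) (hn : 3 ≤ n) (hd : 2 ≤ d) :
    (∀ t : ℕ, RW.dist n d t = BD.dist n d t) ∧
    (∀ ε : ℝ, 0 < ε → ε < 1 → RW.tmix n d ε = BD.tmix n d ε) := by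
  haveI : NeZero n := ⟨by omega⟩
  have hd1 : 1 ≤ d := by omega
  haveI : Nonempty (RW.State n d) := ⟨0⟩
  have key : ∀ t, RW.dist n d t = BD.dist n d t := by
    intro t
    have hRW : ∀ x : RW.State n d,
        tv ((RW.P n d ^ t) x) (RW.pi n d) = tv ((BD.P n d ^ t) 0) (BD.pi n d) := by
      intro x
      rw [tv_translate t x]
      unfold tv
      congr 1
      have hgroup : ∑ z : RW.State n d, |(RW.P n d ^ t) 0 z - RW.pi n d z|
          = ∑ k : Fin (d + 1), ∑ z ∈ Finset.univ.filter
              (fun z : RW.State n d => wtF z = k),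
              |(RW.P n d ^ t) 0 z - RW.pi n d z| := by
        rw [Finset.sum_fiberwise_eq_sum_filter]
        simp
      rw [hgroup]
      apply Finset.sum_congr rfl
      intro k _
      have hsets : Finset.univ.filter (fun z : RW.State n d => wtF z = k)
          = ({z : RW.State n d | wt z = (k : ℕ)} : Finset _) := by
        ext z
        simp only [Finset.mem_filter, Finset.mem_univ, true_and]
        exact ⟨fun hh => by rw [← hh]; rfl, fun hh => Fin.ext hh⟩
      rw [hsets]
      have hconst : ∀ z ∈ ({z : RW.State n d | wt z = (k : ℕ)} : Finset _),
          |(RW.P n d ^ t) 0 z - RW.pi n d z|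
            = |(RW.P n d ^ t) 0 (rep n k) - RW.pi n d (rep n k)| := by
        intro z hz
        simp only [Finset.mem_filter, Finset.mem_univ, true_and] at hz
        rw [unif_pow hn hd1 t z, show wtF z = k from Fin.ext hz]
        rfl
      rw [Finset.sum_congr rfl hconst, Finset.sum_const, nsmul_eq_mul]
      have hNh : ((({z : RW.State n d | wt z = (k : ℕ)} : Finset _).card : ℝ))
            * (RW.P n d ^ t) 0 (rep n k) = (BD.P n d ^ t) 0 k := by
        have h1 := lump_pow hn hd1 t (0 : RW.State n d) k
        rw [wtF_zero] at h1
        rw [← h1]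
        rw [Finset.sum_congr rfl (fun z hz => by
          simp only [Finset.mem_filter, Finset.mem_univ, true_and] at hz
          rw [unif_pow hn hd1 t z, show wtF z = k from Fin.ext hz])]
        rw [Finset.sum_const, nsmul_eq_mul]
      have hNc : ((({z : RW.State n d | wt z = (k : ℕ)} : Finset _).card : ℝ))
            * RW.pi n d (rep n k) = BD.pi n d k := by
        rw [← sum_pi_fiber hn k]
        simp only [RW.pi]
        rw [Finset.sum_const, nsmul_eq_mul]
      rw [← hNh, ← hNc, ← mul_sub, abs_mul, Nat.abs_cast]
    have hBD : ∀ s : Fin (d + 1),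
        tv ((BD.P n d ^ t) s) (BD.pi n d) ≤ tv ((BD.P n d ^ t) 0) (BD.pi n d) := by
      intro s
      have hle : tv ((BD.P n d ^ t) s) (BD.pi n d)
          ≤ tv ((RW.P n d ^ t) (rep n s)) (RW.pi n d) := by
        unfold tv
        gcongr ?_ / 2
        calc ∑ k : Fin (d + 1), |(BD.P n d ^ t) s k - BD.pi n d k|
            = ∑ k : Fin (d + 1), |∑ z ∈ ({z : RW.State n d | wt z = (k : ℕ)} : Finset _),
                ((RW.P n d ^ t) (rep n s) z - RW.pi n d z)| := by
              apply Finset.sum_congr rfl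
              intro k _
              rw [Finset.sum_sub_distrib, lump_pow hn hd1 t (rep n s) k,
                sum_pi_fiber hn k, wtF_rep hn s]
          _ ≤ ∑ k : Fin (d + 1), ∑ z ∈ ({z : RW.State n d | wt z = (k : ℕ)} : Finset _),
                |(RW.P n d ^ t) (rep n s) z - RW.pi n d z| := by
              apply Finset.sum_le_sum
              intro k _
              exact Finset.abs_sum_le_sum_abs _ _
          _ = ∑ z : RW.State n d, |(RW.P n d ^ t) (rep n s) z - RW.pi n d z| := by
              have hsets : ∀ k : Fin (d + 1),
                  ({z : RW.State n d | wt z = (k : ℕ)} : Finset _)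
                    = Finset.univ.filter (fun z : RW.State n d => wtF z = k) := by
                intro k
                ext z
                simp only [Finset.mem_filter, Finset.mem_univ, true_and]
                exact ⟨fun hh => Fin.ext hh, fun hh => by rw [← hh]; rfl⟩
              rw [Finset.sum_congr rfl (fun k _ => by rw [hsets k])]
              rw [Finset.sum_fiberwise_eq_sum_filter]
              simp
      exact hle.trans_eq (hRW (rep n s))
    have hr : RW.dist n d t = tv ((BD.P n d ^ t) 0) (BD.pi n d) := by
      show (⨆ x : RW.State n d, tv ((RW.P n d ^ t) x) (RW.pi n d)) = _
      simp only [hRW]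
      exact ciSup_const
    have hb : BD.dist n d t = tv ((BD.P n d ^ t) 0) (BD.pi n d) := by
      apply le_antisymm
      · exact ciSup_le hBD
      · show tv ((BD.P n d ^ t) 0) (BD.pi n d)
            ≤ ⨆ s : Fin (d + 1), tv ((BD.P n d ^ t) s) (BD.pi n d)
        exact le_ciSup (Set.Finite.bddAbove (Set.finite_range
          (fun s : Fin (d + 1) => tv ((BD.P n d ^ t) s) (BD.pi n d)))) (0 : Fin (d + 1))
    rw [hr, hb]
  refine ⟨key, fun ε _ _ => ?_⟩
  unfold RW.tmix BD.tmix
  congr 1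
  ext t
  simp only [Set.mem_setOf_eq, key t]
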